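/- Let T(n,i) be the tangent numbers and let i ≤ n be natural numbers with n ≡ i (mod 2); set j = (n−i)/2. Then, as integers, 2^{v₂(n!)+1} divides i!·T(n,i) − C(n,j)·n!, where v₂ denotes the 2-adic valuation and C(n,j) is the binomial coefficient. Equivalently, the 2-local integer (i!/n!)·T(n,i) is congruent to the binomial coefficient C(n,(n−i)/2) modulo 2: the coefficients of the divided powers in terms of exterior powers simplify modulo 2 to binomial coefficients. -/
import Mathlib


/-- The tangent numbers `T(n,i)`, defined by `T(0,0) = 1`, `T(0,i) = 0` for `i > 0`, and
`T(n+1,i) = T(n,i-1) + i·(i+1)·T(n,i+1)`, the first term being omitted when `i = 0`.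
They are the coefficients in `(tan t)^i / i! = Σ_{n≥i} T(n,i)·tⁿ/n!`. -/
def tangentNumber : ℕ → ℕ → ℕ
  | 0, i => if i = 0 then 1 else 0
  | n + 1, i => (if i = 0 then 0 else tangentNumber n (i - 1))
      + i * (i + 1) * tangentNumber n (i + 1)

open Finset

def TA (n i : ℕ) : ℕ := Nat.factorial i * tangentNumber n i

def TB (n i : ℕ) : ℕ := if i ≤ n ∧ (n - i) % 2 = 0 then n.choose ((n-i)/2) else 0

def TV (n : ℕ) : ℕ := padicValNat 2 (Nat.factorial n)

lemma tangent_eq_zero_of_lt : ∀ n i, n < i → tangentNumber n i = 0 := by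
  intro n
  induction n with
  | zero => intro i hi; simp [tangentNumber]; omega
  | succ n ih =>
    intro i hi
    have h1 : tangentNumber n (i-1) = 0 := ih _ (by omega)
    have h2 : tangentNumber n (i+1) = 0 := ih _ (by omega)
    simp [tangentNumber, h1, h2]

lemma tangent_eq_zero_of_parity : ∀ n i, (n + i) % 2 = 1 → tangentNumber n i = 0 := by
  intro n
  induction n with
  | zero => intro i hi; simp [tangentNumber]; omega
  | succ n ih =>
    intro i hi
    have h2 : tangentNumber n (i+1) = 0 := ih _ (by omega)
    rcases Nat.eq_zero_or_pos i with h | h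
    · subst h; simp [tangentNumber, h2]
    · have h1 : tangentNumber n (i-1) = 0 := ih _ (by omega)
      simp [tangentNumber, h1, h2, Nat.pos_iff_ne_zero.mp h]

lemma TA_zero_right (n : ℕ) : TA n 0 = if n = 0 then 1 else 0 := by
  cases n with
  | zero => simp [TA, tangentNumber]
  | succ n => simp [TA, tangentNumber]


lemma TA_zero_left (i : ℕ) : TA 0 i = if i = 0 then 1 else 0 := by
  rcases Nat.eq_zero_or_pos i with h | h
  · subst h; simp [TA, tangentNumber]
  · simp [TA, tangentNumber, Nat.pos_iff_ne_zero.mp h]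

lemma TA_rec (n j : ℕ) : TA (n+1) (j+1) = (j+1) * (TA n j + TA n (j+2)) := by
  show Nat.factorial (j+1) * tangentNumber (n+1) (j+1) = _
  have : tangentNumber (n+1) (j+1) = tangentNumber n j + (j+1)*(j+2)*tangentNumber n (j+2) := by
    simp [tangentNumber]
  rw [this]
  simp only [TA, Nat.factorial_succ]
  ring



lemma TA_conv_i0 (n j : ℕ) :
    ∑ k ∈ range (n+1), n.choose k * TA k 0 * TA (n-k) j = TA n j := by
  rw [Finset.sum_eq_single 0]
  · simp [TA_zero_right]
  · intro k hk hk0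
    rw [TA_zero_right, if_neg hk0]; ring
  · intro h; simp at h

lemma TA_conv_j0 (n i : ℕ) :
    ∑ k ∈ range (n+1), n.choose k * TA k i * TA (n-k) 0 = TA n i := by
  rw [Finset.sum_eq_single n]
  · simp [TA_zero_right]
  · intro k hk hk0
    rw [TA_zero_right, if_neg (by simp at hk; omega)]; ring
  · intro h; simp at h

lemma TA_conv : ∀ n i j, ∑ k ∈ range (n+1), n.choose k * TA k i * TA (n-k) j = TA n (i+j) := by
  intro n
  induction n with
  | zero =>
    intro i j
    rcases Nat.eq_zero_or_pos i with hi | hi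
    · subst hi; simpa using TA_conv_i0 0 j
    · rw [Finset.sum_range_one]
      rw [TA_zero_left i, if_neg (by omega), TA_zero_left (i+j), if_neg (by omega)]
      ring
  | succ n ih =>
    intro i j
    rcases Nat.eq_zero_or_pos i with hi | hi
    · subst hi; simpa using TA_conv_i0 (n+1) j
    rcases Nat.eq_zero_or_pos j with hj | hj
    · subst hj; simpa using TA_conv_j0 (n+1) i
    obtain ⟨a, rfl⟩ : ∃ a, i = a + 1 := ⟨i-1, by omega⟩
    obtain ⟨c, rfl⟩ : ∃ c, j = c + 1 := ⟨j-1, by omega⟩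
    -- drop the k = 0 term
    rw [Finset.sum_range_succ']
    have h0 : (n+1).choose 0 * TA 0 (a+1) * TA (n+1-0) (c+1) = 0 := by
      rw [TA_zero_left, if_neg (by omega)]; ring
    rw [h0, add_zero]
    -- now sum over k+1, k ∈ range (n+1)
    have hsplit : ∀ k ∈ range (n+1),
        (n+1).choose (k+1) * TA (k+1) (a+1) * TA (n+1-(k+1)) (c+1)
        = (a+1) * (n.choose k * TA k a * TA (n-k) (c+1))
          + (a+1) * (n.choose k * TA k (a+2) * TA (n-k) (c+1))
          + (n.choose (k+1) * TA (k+1) (a+1) * TA (n+1-(k+1)) (c+1)) := by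
      intro k hk
      rw [Nat.choose_succ_succ, TA_rec k a]
      have : n+1-(k+1) = n-k := by omega
      rw [this]; ring
    rw [Finset.sum_congr rfl hsplit]
    simp only [Finset.sum_add_distrib, ← Finset.mul_sum]
    rw [ih a (c+1), ih (a+2) (c+1)]
    -- last sum: reindex to range (n+2) then peel
    have hre : ∑ k ∈ range (n+1), n.choose (k+1) * TA (k+1) (a+1) * TA (n+1-(k+1)) (c+1)
        = ∑ k ∈ range (n+1), n.choose k * TA k (a+1) * TA (n+1-k) (c+1) := by
      have := Finset.sum_range_succ' (fun k => n.choose k * TA k (a+1) * TA (n+1-k) (c+1)) (n+1)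
      rw [Finset.sum_range_succ (fun k => n.choose k * TA k (a+1) * TA (n+1-k) (c+1)) (n+1)] at this
      have hz1 : n.choose (n+1) * TA (n+1) (a+1) * TA (n+1-(n+1)) (c+1) = 0 := by
        rw [Nat.choose_succ_self]; ring
      have hz2 : n.choose 0 * TA 0 (a+1) * TA (n+1-0) (c+1) = 0 := by
        rw [TA_zero_left, if_neg (by omega)]; ring
      omega
    rw [hre]
    have hsplit2 : ∀ k ∈ range (n+1),
        n.choose k * TA k (a+1) * TA (n+1-k) (c+1)
        = (c+1) * (n.choose k * TA k (a+1) * TA (n-k) c)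
          + (c+1) * (n.choose k * TA k (a+1) * TA (n-k) (c+2)) := by
      intro k hk
      simp only [mem_range] at hk
      have : n+1-k = (n-k)+1 := by omega
      rw [this, TA_rec (n-k) c]; ring
    rw [Finset.sum_congr rfl hsplit2]
    simp only [Finset.sum_add_distrib, ← Finset.mul_sum]
    rw [ih (a+1) c, ih (a+1) (c+2)]
    have : a + 1 + (c + 1) = (a + (c+1)) + 1 := by omega
    rw [this, TA_rec n (a + (c+1))]
    have e1 : a + (c+1) = a + 1 + c := by omega
    have e2 : a + (c+1) + 2 = a + 2 + (c+1) := by omega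
    have e3 : a + (c+1) + 2 = a + 1 + (c+2) := by omega
    -- goal arithmetic
    rw [show a + (c+1) = a + 1 + c from by omega]
    ring_nf




lemma TB_out (n i : ℕ) (h : ¬(i ≤ n ∧ (n-i) % 2 = 0)) : TB n i = 0 := if_neg h

lemma central_even (s : ℕ) (hs : 1 ≤ s) : 2 ∣ (2*s).choose s := by
  obtain ⟨t, rfl⟩ : ∃ t, s = t+1 := ⟨s-1, by omega⟩
  have h1 : 2*(t+1) = (2*t+1)+1 := by ring
  rw [h1, Nat.choose_succ_succ]
  have h2 : (2*t+1).choose t = (2*t+1).choose (t+1) := by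
    rw [← Nat.choose_symm (by omega : t+1 ≤ 2*t+1)]
    congr 1; omega
  simp only [Nat.succ_eq_add_one] at *
  omega

lemma TB_even_zero (k : ℕ) (hk : 1 ≤ k) : 2 ∣ TB k 0 := by
  unfold TB
  split
  · next h =>
    obtain ⟨-, h2⟩ := h
    obtain ⟨s, rfl⟩ : ∃ s, k = 2*s := ⟨k/2, by omega⟩
    rw [show (2*s-0)/2 = s from by omega]
    exact central_even s (by omega)
  · exact Dvd.intro 0 rfl

lemma TB_pascal (n i : ℕ) : TB (n+1) (i+1) = TB n i + TB n (i+2) := by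
  rcases Nat.lt_or_ge n i with h | h
  · rw [TB_out _ _ (by omega), TB_out _ _ (by omega), TB_out _ _ (by omega)]
  rcases Nat.eq_or_lt_of_le h with rfl | hlt
  · unfold TB
    rw [if_pos (by omega), if_pos (by omega)]
    rw [if_neg (by omega)]
    simp [Nat.sub_self]
  rcases Nat.even_or_odd (n - i) with he | ho
  · have hpar : (n - i) % 2 = 0 := by obtain ⟨t, ht⟩ := he; omega
    obtain ⟨d, rfl⟩ : ∃ d, n = i + (2*d+2) := ⟨(n-i)/2 - 1, by omega⟩
    unfold TB
    rw [if_pos (by omega), if_pos (by omega), if_pos (by omega)]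
    have e1 : i + (2*d+2) + 1 - (i+1) = 2*d+2 := by omega
    have e2 : i + (2*d+2) - i = 2*d+2 := by omega
    have e3 : i + (2*d+2) - (i+2) = 2*d := by omega
    rw [e1, e2, e3]
    rw [show (2*d+2)/2 = d+1 from by omega, show (2*d)/2 = d from by omega]
    exact (Nat.choose_succ_succ _ _).trans (add_comm _ _)
  · have hpar : (n - i) % 2 = 1 := by obtain ⟨t, ht⟩ := ho; omega
    rw [TB_out _ _ (by omega), TB_out _ _ (by omega), TB_out _ _ (by omega)]

lemma TB_conv : ∀ n i j, (∑ k ∈ range (n+1), (TB k i * TB (n-k) j : ZMod 2))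
    = (TB n (i+j) : ZMod 2) := by
  intro n
  induction n with
  | zero =>
    intro i j
    rw [Finset.sum_range_one]
    rcases Nat.eq_zero_or_pos (i+j) with hij | hij
    · obtain ⟨rfl, rfl⟩ : i = 0 ∧ j = 0 := by omega
      simp [TB]
    · have h1 : TB 0 (i+j) = 0 := TB_out _ _ (by omega)
      rw [h1]
      rcases Nat.eq_zero_or_pos i with rfl | hi
      · have h2 : TB (0-0) j = 0 := TB_out _ _ (by omega)
        rw [h2]; push_cast; ring
      · have h2 : TB 0 i = 0 := TB_out _ _ (by omega)
        rw [h2]; push_cast; ring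
  | succ n ih =>
    intro i j
    rcases Nat.eq_zero_or_pos i with rfl | hi
    · rw [Finset.sum_range_succ']
      have hz : ∀ k ∈ range (n+1), (TB (k+1) 0 * TB (n+1-(k+1)) j : ZMod 2) = 0 := by
        intro k hk
        have : (TB (k+1) 0 : ZMod 2) = 0 := by
          rw [ZMod.natCast_eq_zero_iff]
          exact TB_even_zero (k+1) (by omega)
        rw [this, zero_mul]
      rw [Finset.sum_congr rfl hz]
      simp [TB]
    rcases Nat.eq_zero_or_pos j with rfl | hj
    · rw [Finset.sum_range_succ]
      have hz : ∀ k ∈ range (n+1), (TB k i * TB (n+1-k) 0 : ZMod 2) = 0 := by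
        intro k hk
        simp only [mem_range] at hk
        have : (TB (n+1-k) 0 : ZMod 2) = 0 := by
          rw [ZMod.natCast_eq_zero_iff]
          exact TB_even_zero _ (by omega)
        rw [this, mul_zero]
      rw [Finset.sum_congr rfl hz]
      simp [TB]
    obtain ⟨a, rfl⟩ : ∃ a, i = a + 1 := ⟨i-1, by omega⟩
    obtain ⟨c, rfl⟩ : ∃ c, j = c + 1 := ⟨j-1, by omega⟩
    rw [Finset.sum_range_succ']
    have h0 : (TB 0 (a+1) * TB (n+1-0) (c+1) : ZMod 2) = 0 := by
      rw [TB_out 0 (a+1) (by omega)]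
      push_cast; ring
    rw [h0, add_zero]
    have hsplit : ∀ k ∈ range (n+1),
        (TB (k+1) (a+1) * TB (n+1-(k+1)) (c+1) : ZMod 2)
        = (TB k a * TB (n-k) (c+1) : ZMod 2) + (TB k (a+2) * TB (n-k) (c+1) : ZMod 2) := by
      intro k hk
      rw [show n+1-(k+1) = n-k from by omega, TB_pascal k a]
      push_cast; ring
    rw [Finset.sum_congr rfl hsplit, Finset.sum_add_distrib, ih a (c+1), ih (a+2) (c+1)]
    rw [show a+1+(c+1) = (a+(c+1))+1 from by omega, TB_pascal n (a+(c+1))]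
    push_cast
    rw [show a+(c+1)+2 = a+2+(c+1) from by omega]




lemma TV_split (n k : ℕ) (hk : k ≤ n) :
    TV n = padicValNat 2 (n.choose k) + TV k + TV (n-k) := by
  unfold TV
  rw [← Nat.choose_mul_factorial_mul_factorial hk]
  rw [padicValNat.mul (Nat.mul_ne_zero (Nat.ne_of_gt (Nat.choose_pos hk)) (Nat.factorial_ne_zero _)) (Nat.factorial_ne_zero _),
    padicValNat.mul (Nat.ne_of_gt (Nat.choose_pos hk)) (Nat.factorial_ne_zero _)]

lemma dvd_key1 (n k : ℕ) (hk : k ≤ n) :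
    (2:ℕ)^(TV n + 1) ∣ (n.choose k * Nat.factorial k) * 2^(TV (n-k) + 1) := by
  rw [TV_split n k hk]
  have h1 : (2:ℕ)^(padicValNat 2 (n.choose k)) ∣ n.choose k := pow_padicValNat_dvd
  have h2 : (2:ℕ)^(TV k) ∣ Nat.factorial k := pow_padicValNat_dvd
  calc (2:ℕ)^(padicValNat 2 (n.choose k) + TV k + (TV (n-k)) + 1)
      = (2^(padicValNat 2 (n.choose k)) * 2^(TV k)) * 2^(TV (n-k) + 1) := by ring
    _ ∣ (n.choose k * Nat.factorial k) * 2^(TV (n-k) + 1) :=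
        mul_dvd_mul (mul_dvd_mul h1 h2) dvd_rfl

lemma dvd_key2 (n k : ℕ) (hk : k ≤ n) :
    (2:ℕ)^(TV n + 1) ∣ (n.choose k * Nat.factorial (n-k)) * 2^(TV k + 1) := by
  have := dvd_key1 n (n-k) (by omega)
  rw [Nat.choose_symm hk, show n - (n-k) = k from by omega] at this
  exact this

lemma dvd_key3 (n k : ℕ) (hk : k ≤ n) :
    (2:ℕ)^(TV n + 1) ∣ n.choose k * (2^(TV k + 1) * 2^(TV (n-k) + 1)) := by
  rw [TV_split n k hk]
  have h1 : (2:ℕ)^(padicValNat 2 (n.choose k)) ∣ n.choose k := pow_padicValNat_dvd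
  calc (2:ℕ)^(padicValNat 2 (n.choose k) + TV k + (TV (n-k)) + 1)
      ∣ (2:ℕ)^(padicValNat 2 (n.choose k) + TV k + (TV (n-k)) + 2) :=
        pow_dvd_pow 2 (by omega)
    _ = 2^(padicValNat 2 (n.choose k)) * (2^(TV k + 1) * 2^(TV (n-k) + 1)) := by ring
    _ ∣ n.choose k * (2^(TV k + 1) * 2^(TV (n-k) + 1)) := mul_dvd_mul h1 dvd_rfl

lemma TV_int_dvd (n : ℕ) : (2:ℤ)^(TV n) ∣ (Nat.factorial n : ℤ) := by
  exact_mod_cast Int.natCast_dvd_natCast.mpr pow_padicValNat_dvd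

lemma TA_def (n i : ℕ) : TA n i = Nat.factorial i * tangentNumber n i := rfl

lemma TB_def (n i : ℕ) : TB n i = if i ≤ n ∧ (n - i) % 2 = 0 then n.choose ((n-i)/2) else 0 := rfl

theorem master : ∀ n i, (2:ℤ)^(TV n + 1) ∣ (TA n i : ℤ) - TB n i * (Nat.factorial n : ℤ) := by
  intro n
  induction n using Nat.strong_induction_on with
  | _ n ih =>
  intro i
  induction i using Nat.strong_induction_on with
  | _ i ihi =>
  match i with
  | 0 =>
    match n with
    | 0 =>
      rw [TA_zero_right, TB_def]
      norm_num
    | (m+1) =>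
      rw [TA_zero_right, if_neg (by omega)]
      push_cast
      rcases Nat.even_or_odd (m+1) with he | ho
      · obtain ⟨c, hc⟩ := TB_even_zero (m+1) (by omega)
        have h1 : (2:ℤ)^(TV (m+1)) ∣ ((m+1).factorial : ℤ) := TV_int_dvd (m+1)
        have h2 : (2:ℤ) ∣ (TB (m+1) 0 : ℤ) := by exact_mod_cast Int.natCast_dvd_natCast.mpr ⟨c, hc⟩
        rw [zero_sub, dvd_neg, pow_succ, mul_comm ((TB (m+1) 0 : ℤ)) _]
        exact mul_dvd_mul h1 h2
      · rw [TB_out (m+1) 0 (by obtain ⟨t,ht⟩ := ho; omega)]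
        simp
  | 1 =>
    match n with
    | 0 =>
      have h1 : TA 0 1 = 0 := by rw [TA_zero_left]; norm_num
      have h2 : TB 0 1 = 0 := TB_out 0 1 (by omega)
      rw [h1, h2]; simp
    | (m+1) =>
      rcases Nat.even_or_odd m with he | ho
      · rcases Nat.eq_zero_or_pos m with rfl | hpos
        · have h1 : TA 1 1 = 1 := by
            rw [TA_rec 0 0, TA_zero_right, TA_zero_left]; norm_num
          have h2 : TB 1 1 = 1 := by rw [TB_def]; norm_num
          rw [h1, h2]; simp [Nat.factorial]
        · have hm2 : 2 ≤ m := by obtain ⟨t,ht⟩ := he; omega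
          have hme : m % 2 = 0 := by obtain ⟨t,ht⟩ := he; omega
          have hA : TA (m+1) 1 = TA m 2 := by
            rw [TA_rec m 0, TA_zero_right, if_neg (by omega)]; ring
          have hTV : TV (m+1) = TV m := by
            unfold TV
            rw [Nat.factorial_succ, padicValNat.mul (by omega) (Nat.factorial_ne_zero m),
              padicValNat.eq_zero_of_not_dvd (by omega : ¬ (2:ℕ) ∣ (m+1))]
            omega
          have ih2 := ih m (by omega) 2
          have hb2 : TB m 2 = m.choose (m/2 - 1) := by
            rw [TB_def, if_pos (by omega), show (m-2)/2 = m/2 - 1 from by omega]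
          have hb1 : TB (m+1) 1 = (m+1).choose (m/2) := by
            rw [TB_def, if_pos (by omega), show (m+1-1)/2 = m/2 from by omega]
          have hPascal : (m+1).choose (m/2) = m.choose (m/2 - 1) + m.choose (m/2) := by
            rw [show m/2 = (m/2-1)+1 from by omega, Nat.choose_succ_succ]
            simp only [Nat.succ_eq_add_one]
            rw [show m/2-1+1 = m/2 from by omega]
          obtain ⟨y, hy⟩ : 2 ∣ m.choose (m/2) := by
            obtain ⟨s', hs'⟩ : ∃ s', m = 2*s' := ⟨m/2, by omega⟩
            rw [hs', show (2*s')/2 = s' from by omega]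
            exact central_even s' (by omega)
          have hres : (2:ℤ)^(TV m + 1) ∣
              (TB m 2 * (m.factorial : ℤ) - TB (m+1) 1 * ((m+1).factorial : ℤ)) := by
            have h2 : (2:ℤ) ∣ ((TB m 2 : ℤ) - (m+1) * TB (m+1) 1) := by
              rw [hb2, hb1]
              have hPZ : ((m+1).choose (m/2) : ℤ) = m.choose (m/2 - 1) + m.choose (m/2) := by
                exact_mod_cast hPascal
              rw [hPZ]
              have hyZ : (m.choose (m/2) : ℤ) = 2*y := by exact_mod_cast hy
              rw [hyZ]
              obtain ⟨t, ht⟩ : 2 ∣ m := ⟨m/2, by omega⟩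
              have htZ : (m : ℤ) = 2*t := by exact_mod_cast ht
              rw [htZ]
              ring_nf
              omega
            have hmul := mul_dvd_mul h2 (TV_int_dvd m)
            calc (2:ℤ)^(TV m + 1) = 2 * 2^(TV m) := by ring
              _ ∣ ((TB m 2 : ℤ) - (m+1) * TB (m+1) 1) * (m.factorial : ℤ) := hmul
              _ = TB m 2 * (m.factorial : ℤ) - TB (m+1) 1 * ((m+1).factorial : ℤ) := by
                  rw [Nat.factorial_succ]; push_cast; ring
          rw [hTV, hA]
          calc (2:ℤ)^(TV m + 1)
              ∣ ((TA m 2 : ℤ) - TB m 2 * m.factorial)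
                + (TB m 2 * (m.factorial:ℤ) - TB (m+1) 1 * ((m+1).factorial : ℤ)) :=
                dvd_add ih2 hres
            _ = (TA m 2 : ℤ) - TB (m+1) 1 * ((m+1).factorial : ℤ) := by ring
      · have hp : ((m+1) + 1) % 2 = 1 := by obtain ⟨t,ht⟩ := ho; omega
        have h1 : TA (m+1) 1 = 0 := by
          rw [TA_def, tangent_eq_zero_of_parity _ _ hp]; ring
        have h2 : TB (m+1) 1 = 0 := TB_out _ _ (by omega)
        rw [h1, h2]; simp
  | (r+2) =>
    have conv := TA_conv n (r+1) 1
    have convZ := congrArg (Nat.cast : ℕ → ℤ) conv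
    push_cast at convZ
    have hE : ∀ k ∈ range (n+1), (2:ℤ)^(TV k + 1) ∣ ((TA k (r+1) : ℤ) - TB k (r+1) * k.factorial) := by
      intro k hk
      simp only [mem_range] at hk
      rcases Nat.eq_or_lt_of_le (by omega : k ≤ n) with rfl | hlt
      · exact ihi (r+1) (by omega)
      · exact ih k hlt (r+1)
    have hF : ∀ k ∈ range (n+1), (2:ℤ)^(TV (n-k) + 1) ∣ ((TA (n-k) 1 : ℤ) - TB (n-k) 1 * (n-k).factorial) := by
      intro k hk
      simp only [mem_range] at hk
      rcases Nat.eq_zero_or_pos k with rfl | hpos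
      · rw [Nat.sub_zero]; exact ihi 1 (by omega)
      · exact ih (n-k) (by omega) 1
    have key : ∀ k ∈ range (n+1),
        ((n.choose k : ℤ) * TA k (r+1) * TA (n-k) 1)
        = (n.factorial : ℤ) * (TB k (r+1) * TB (n-k) 1)
          + ( (n.choose k * k.factorial : ℤ) * TB k (r+1) * ((TA (n-k) 1 : ℤ) - TB (n-k) 1 * (n-k).factorial)
            + (n.choose k * (n-k).factorial : ℤ) * TB (n-k) 1 * ((TA k (r+1) : ℤ) - TB k (r+1) * k.factorial)
            + (n.choose k : ℤ) * (((TA k (r+1) : ℤ) - TB k (r+1) * k.factorial) * ((TA (n-k) 1 : ℤ) - TB (n-k) 1 * (n-k).factorial)) ) := by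
      intro k hk
      simp only [mem_range] at hk
      have hfact := congrArg (Nat.cast : ℕ → ℤ) (Nat.choose_mul_factorial_mul_factorial (by omega : k ≤ n))
      push_cast at hfact
      linear_combination (TB k (r+1) * TB (n-k) 1 : ℤ) * hfact
    have hmain : (TA n (r+2) : ℤ) - TB n (r+2) * (n.factorial : ℤ)
        = (n.factorial : ℤ) * ((∑ k ∈ range (n+1), (TB k (r+1) * TB (n-k) 1 : ℤ)) - TB n (r+2))
          + ∑ k ∈ range (n+1),
            ( (n.choose k * k.factorial : ℤ) * TB k (r+1) * ((TA (n-k) 1 : ℤ) - TB (n-k) 1 * (n-k).factorial)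
            + (n.choose k * (n-k).factorial : ℤ) * TB (n-k) 1 * ((TA k (r+1) : ℤ) - TB k (r+1) * k.factorial)
            + (n.choose k : ℤ) * (((TA k (r+1) : ℤ) - TB k (r+1) * k.factorial) * ((TA (n-k) 1 : ℤ) - TB (n-k) 1 * (n-k).factorial)) ) := by
      rw [← convZ, Finset.sum_congr rfl key, Finset.sum_add_distrib, ← Finset.mul_sum]
      ring
    rw [hmain]
    apply dvd_add
    · have h2 : (2:ℤ) ∣ ((∑ k ∈ range (n+1), (TB k (r+1) * TB (n-k) 1 : ℤ)) - TB n (r+2)) := by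
        have hzm := TB_conv n (r+1) 1
        rw [show (r+1)+1 = r+2 from rfl] at hzm
        have hcast : (((∑ k ∈ range (n+1), (TB k (r+1) * TB (n-k) 1 : ℤ)) - TB n (r+2) : ℤ) : ZMod 2) = 0 := by
          push_cast
          rw [← hzm]
          push_cast
          ring
        exact (ZMod.intCast_zmod_eq_zero_iff_dvd _ 2).mp hcast
      rw [pow_succ]
      exact mul_dvd_mul (TV_int_dvd n) h2
    · apply Finset.dvd_sum
      intro k hk
      have hkn : k ≤ n := by simp only [mem_range] at hk; omega
      obtain ⟨f, hf⟩ := hF k hk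
      obtain ⟨e, he⟩ := hE k hk
      apply dvd_add
      apply dvd_add
      · rw [hf]
        have hz : (2:ℤ)^(TV n + 1) ∣ (((n.choose k * Nat.factorial k) * 2^(TV (n-k) + 1) : ℕ) : ℤ) := by
          exact_mod_cast Int.natCast_dvd_natCast.mpr (dvd_key1 n k hkn)
        calc (2:ℤ)^(TV n + 1)
            ∣ (((n.choose k * Nat.factorial k) * 2^(TV (n-k) + 1) : ℕ) : ℤ) := hz
          _ ∣ (((n.choose k * Nat.factorial k) * 2^(TV (n-k) + 1) : ℕ) : ℤ) * (TB k (r+1) * f) := dvd_mul_right _ _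
          _ = (n.choose k * k.factorial : ℤ) * TB k (r+1) * (2^(TV (n-k) + 1) * f) := by push_cast; ring
      · rw [he]
        have hz : (2:ℤ)^(TV n + 1) ∣ (((n.choose k * Nat.factorial (n-k)) * 2^(TV k + 1) : ℕ) : ℤ) := by
          exact_mod_cast Int.natCast_dvd_natCast.mpr (dvd_key2 n k hkn)
        calc (2:ℤ)^(TV n + 1)
            ∣ (((n.choose k * Nat.factorial (n-k)) * 2^(TV k + 1) : ℕ) : ℤ) := hz
          _ ∣ (((n.choose k * Nat.factorial (n-k)) * 2^(TV k + 1) : ℕ) : ℤ) * (TB (n-k) 1 * e) := dvd_mul_right _ _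
          _ = (n.choose k * (n-k).factorial : ℤ) * TB (n-k) 1 * (2^(TV k + 1) * e) := by push_cast; ring
      · rw [he, hf]
        have hz : (2:ℤ)^(TV n + 1) ∣ ((n.choose k * (2^(TV k + 1) * 2^(TV (n-k) + 1)) : ℕ) : ℤ) := by
          exact_mod_cast Int.natCast_dvd_natCast.mpr (dvd_key3 n k hkn)
        calc (2:ℤ)^(TV n + 1)
            ∣ ((n.choose k * (2^(TV k + 1) * 2^(TV (n-k) + 1)) : ℕ) : ℤ) := hz
          _ ∣ ((n.choose k * (2^(TV k + 1) * 2^(TV (n-k) + 1)) : ℕ) : ℤ) * (e * f) := dvd_mul_right _ _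
          _ = (n.choose k : ℤ) * ((2^(TV k + 1) * e) * (2^(TV (n-k) + 1) * f)) := by push_cast; ring

/-- For `i ≤ n` with `n ≡ i (mod 2)` and `j = (n−i)/2`, the integer
`i!·T(n,i) − C(n,j)·n!` is divisible by `2^{v₂(n!)+1}`: the 2-local integer
`(i!/n!)·T(n,i)` is congruent to the binomial coefficient `C(n,(n−i)/2)` modulo 2. -/
theorem factorial_mul_tangentNumber_congr_choose
    (n i : ℕ) (hin : i ≤ n) (hpar : n % 2 = i % 2) :
    (2 : ℤ) ^ (padicValNat 2 (Nat.factorial n) + 1) ∣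
      (Nat.factorial i * tangentNumber n i : ℤ)
        - (n.choose ((n - i) / 2) * Nat.factorial n : ℤ) := by
  have h := master n i
  have hb : TB n i = n.choose ((n-i)/2) := by
    rw [TB_def, if_pos ⟨hin, by omega⟩]
  rw [TA_def, hb] at h
  have h2 : TV n = padicValNat 2 (Nat.factorial n) := rfl
  rw [h2] at h
  push_cast at h ⊢
  convert h using 2
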